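/- For all integers t ≥ s ≥ 2, there exist constants c₁, c₂ > 0 and n₀ such that for all n ≥ n₀, c₁ · ex(n,K_{s,t}) ≤ êx_3(n,K_{s,t}) ≤ c₂ · ex(n,K_{s,t}), where K_{s,t} is the complete bipartite graph with parts of sizes s and t. -/

import Mathlib

/-- A hypergraph `H` (given by its finite collection of hyperedges on vertex type `β`)
contains a Berge copy of the graph `G`: there is an injection of the vertices of `G`
and an injection of the edges of `G` into hyperedges of `H` such that each edge of `G`
is contained in its corresponding hyperedge. -/
def HasBergeCopy {α β : Type*} [DecidableEq β] (G : SimpleGraph α)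
    (H : Finset (Finset β)) : Prop :=
  ∃ (i : α → β) (f : Sym2 α → Finset β),
    Function.Injective i ∧ Set.InjOn f G.edgeSet ∧
    (∀ e ∈ G.edgeSet, f e ∈ H) ∧
    (∀ u v, G.Adj u v → i u ∈ f s(u, v) ∧ i v ∈ f s(u, v))

/-- The edge set of the shadow graph of a hypergraph `H`: all 2-element subsets of
vertices covered by some hyperedge of `H`. -/
def covPairs {β : Type*} [DecidableEq β] (H : Finset (Finset β)) : Finset (Finset β) :=
  H.biUnion fun h => Finset.powersetCard 2 h

/-- The `R`-cover Turán number `êx_R(n, G)`: the maximum number of edges in the shadow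
of a Berge-`G`-free `R`-graph on `n` vertices. -/
noncomputable def coverTuranNumber {α : Type*} (R : Set ℕ) (n : ℕ)
    (G : SimpleGraph α) : ℕ :=
  sSup { m | ∃ H : Finset (Finset (Fin n)),
    (∀ h ∈ H, h.card ∈ R) ∧ ¬ HasBergeCopy G H ∧ m = (covPairs H).card }

/-- The classical Turán number `ex(n, G)`: the maximum number of edges of a simple
graph on `n` vertices containing no subgraph isomorphic to `G`. -/
noncomputable def turanNumber {α : Type*} (n : ℕ) (G : SimpleGraph α) : ℕ :=
  sSup { m | ∃ F : SimpleGraph (Fin n),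
    ¬ (∃ f : G →g F, Function.Injective f) ∧ m = F.edgeSet.ncard }

open Finset Function

section Aux
variable {α : Type*}

def TSet (n : ℕ) (G : SimpleGraph α) : Set ℕ :=
  { m | ∃ F : SimpleGraph (Fin n), ¬ (∃ f : G →g F, Function.Injective f) ∧ m = F.edgeSet.ncard }

lemma tset_bdd (n : ℕ) (G : SimpleGraph α) : BddAbove (TSet n G) := by
  refine ⟨Fintype.card (Sym2 (Fin n)), ?_⟩
  rintro m ⟨F, -, rfl⟩
  calc F.edgeSet.ncard ≤ (Set.univ : Set (Sym2 (Fin n))).ncard :=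
        Set.ncard_le_ncard (Set.subset_univ _) Set.finite_univ
    _ = _ := by rw [Set.ncard_univ, Nat.card_eq_fintype_card]

variable {G : SimpleGraph α} {u₀ v₀ : α}

lemma tset_nonempty (hG : G.Adj u₀ v₀) (n : ℕ) : (TSet n G).Nonempty := by
  refine ⟨0, ⊥, ?_, by simp⟩
  rintro ⟨f, -⟩; exact f.map_adj hG

lemma turan_mem (hG : G.Adj u₀ v₀) (n : ℕ) : turanNumber n G ∈ TSet n G :=
  Nat.sSup_mem (tset_nonempty hG n) (tset_bdd n G)

lemma le_turan {n : ℕ} (F : SimpleGraph (Fin n))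
    (hfree : ¬ (∃ f : G →g F, Function.Injective f)) :
    F.edgeSet.ncard ≤ turanNumber n G :=
  le_csSup (tset_bdd n G) ⟨F, hfree, rfl⟩

-- deletion step
lemma turan_step (hG : G.Adj u₀ v₀) (n : ℕ) (hn : 2 ≤ n) :
    (n - 1) * turanNumber (n + 1) G ≤ (n + 1) * turanNumber n G := by
  classical
  obtain ⟨F, hfree, hcard⟩ := turan_mem hG (n + 1)
  set e := turanNumber (n+1) G with he
  have hecard : F.edgeFinset.card = e := by
    rw [hcard, Set.ncard_eq_toFinset_card']
    exact congrArg Finset.card (by ext; simp)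
  -- min degree vertex
  have hv : ∃ v : Fin (n+1), (n + 1) * F.degree v ≤ 2 * e := by
    by_contra hcon
    push_neg at hcon
    have hsum : ∑ v : Fin (n+1), F.degree v = 2 * e := by
      rw [SimpleGraph.sum_degrees_eq_twice_card_edges, hecard]
    have h1 : (n+1) * (2 * e + 1) ≤ ∑ v : Fin (n+1), (n+1) * F.degree v := by
      calc (n+1) * (2*e+1) = ∑ _v : Fin (n+1), (2*e+1) := by
            rw [Finset.sum_const, card_univ, Fintype.card_fin, smul_eq_mul]
        _ ≤ _ := Finset.sum_le_sum (fun v _ => hcon v)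
    rw [← Finset.mul_sum, hsum] at h1
    nlinarith
  obtain ⟨v, hv⟩ := hv
  set emb := v.succAboveEmb with hemb
  set F' := F.comap (⇑emb) with hF'
  have hfree' : ¬ (∃ f : G →g F', Function.Injective f) := by
    rintro ⟨f, finj⟩
    refine hfree ⟨SimpleGraph.Hom.comp ⟨fun a => emb a, fun hadj => hadj⟩ f, ?_⟩
    exact (emb.injective.comp finj)
  have hle : F'.edgeSet.ncard ≤ turanNumber n G := le_turan F' hfree'
  have hcard' : F'.edgeFinset.card = F'.edgeSet.ncard := by
    rw [Set.ncard_eq_toFinset_card']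
    exact congrArg Finset.card (by ext; simp)
  -- e ≤ |F'| + deg v
  have hsplit : e ≤ F'.edgeFinset.card + F.degree v := by
    have h1 : (F.edgeFinset.filter (fun ed => v ∈ ed)).card = F.degree v := by
      rw [← SimpleGraph.incidenceFinset_eq_filter, SimpleGraph.card_incidenceFinset_eq_degree]
    have h2 : (F.edgeFinset.filter (fun ed => ¬ v ∈ ed)).card ≤ F'.edgeFinset.card := by
      apply Finset.card_le_card_of_surjOn (fun ed => Sym2.map (⇑emb) ed)
      rintro ed hed
      simp only [Finset.coe_filter, Set.mem_setOf_eq, SimpleGraph.mem_edgeFinset] at hed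
      obtain ⟨hed, hv'⟩ := hed
      induction ed with
      | _ a b =>
        rw [Sym2.mem_iff] at hv'
        push_neg at hv'
        obtain ⟨a', ha'⟩ := Fin.exists_succAbove_eq (Ne.symm hv'.1)
        obtain ⟨b', hb'⟩ := Fin.exists_succAbove_eq (Ne.symm hv'.2)
        refine ⟨s(a', b'), ?_, ?_⟩
        · simp only [Finset.mem_coe, SimpleGraph.mem_edgeFinset, SimpleGraph.mem_edgeSet]
          show F.Adj (emb a') (emb b')
          simp only [hemb, Fin.coe_succAboveEmb] at *
          rw [ha', hb']
          rwa [SimpleGraph.mem_edgeSet] at hed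
        · simp only [Sym2.map_pair_eq]
          simp only [hemb, Fin.coe_succAboveEmb] at *
          rw [ha', hb']
    calc e = (F.edgeFinset.filter (fun ed => v ∈ ed)).card
            + (F.edgeFinset.filter (fun ed => ¬ v ∈ ed)).card := by
          rw [Finset.card_filter_add_card_filter_not, hecard]
      _ ≤ F.degree v + F'.edgeFinset.card := by rw [h1]; exact Nat.add_le_add_left h2 _
      _ = _ := Nat.add_comm _ _
  -- combine
  have key : (n + 1) * e ≤ (n + 1) * F'.edgeFinset.card + 2 * e := by
    calc (n+1) * e ≤ (n+1) * (F'.edgeFinset.card + F.degree v) :=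
          Nat.mul_le_mul_left _ hsplit
      _ = (n+1) * F'.edgeFinset.card + (n+1) * F.degree v := by ring
      _ ≤ _ := Nat.add_le_add_left hv _
  have : (n - 1) * e ≤ (n + 1) * F'.edgeFinset.card := by
    have hrw : (n + 1) * e = (n - 1) * e + 2 * e := by
      have : n + 1 = (n - 1) + 2 := by omega
      rw [this, Nat.add_mul]
    omega
  calc (n-1) * e ≤ (n+1) * F'.edgeFinset.card := this
    _ ≤ (n+1) * turanNumber n G := by
        rw [hcard']; exact Nat.mul_le_mul_left _ hle

lemma turan_supermult (hG : G.Adj u₀ v₀) {k n : ℕ} (hk : 2 ≤ k) (hkn : k ≤ n) :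
    k * (k - 1) * turanNumber n G ≤ n * (n - 1) * turanNumber k G := by
  induction n, hkn using Nat.le_induction with
  | base => exact le_rfl
  | succ n hn ih =>
    have hn2 : 2 ≤ n := le_trans hk hn
    have step := turan_step hG n hn2
    -- (n-1) * [k(k-1) A] ≤ k(k-1)(n+1) B ≤ (n+1) n (n-1) C = (n-1)[(n+1) n C]
    have h1 : (n - 1) * (k * (k-1) * turanNumber (n+1) G)
        ≤ (n - 1) * ((n+1) * n * turanNumber k G) := by
      calc (n - 1) * (k * (k-1) * turanNumber (n+1) G)
          = k * (k-1) * ((n-1) * turanNumber (n+1) G) := by ring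
        _ ≤ k * (k-1) * ((n+1) * turanNumber n G) := Nat.mul_le_mul_left _ step
        _ = (n+1) * (k * (k-1) * turanNumber n G) := by ring
        _ ≤ (n+1) * (n * (n-1) * turanNumber k G) := Nat.mul_le_mul_left _ ih
        _ = (n - 1) * ((n+1) * n * turanNumber k G) := by ring
    have hpos : 0 < n - 1 := by omega
    have := Nat.le_of_mul_le_mul_left h1 hpos
    calc k * (k-1) * turanNumber (n+1) G ≤ (n+1) * n * turanNumber k G := this
      _ = (n+1) * ((n+1) - 1) * turanNumber k G := by
          congr 3


lemma pair_eq_sym2 {V : Type*} [DecidableEq V] {a b c d : V}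
    (h : ({a, b} : Finset V) = {c, d}) : s(a, b) = s(c, d) := by
  have ha : a = c ∨ a = d := by
    have : a ∈ ({c, d} : Finset V) := by rw [← h]; simp
    simpa using this
  have hb : b = c ∨ b = d := by
    have : b ∈ ({c, d} : Finset V) := by rw [← h]; simp
    simpa using this
  have hc : c = a ∨ c = b := by
    have : c ∈ ({a, b} : Finset V) := by rw [h]; simp
    simpa using this
  have hd : d = a ∨ d = b := by
    have : d ∈ ({a, b} : Finset V) := by rw [h]; simp
    simpa using this
  rw [Sym2.eq_iff]
  rcases ha with h1 | h1 <;> rcases hb with h2 | h2 <;> rcases hc with h3 | h3 <;>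
    rcases hd with h4 | h4 <;> subst_vars <;> tauto

lemma greedy {V : Type*} [DecidableEq V] :
    ∀ (H : Finset (Finset V)), (∀ h ∈ H, h.card = 3) →
    ∃ (S : Finset (Finset V)) (φ : Finset V → Finset V),
      (∀ p ∈ S, p.card = 2 ∧ p ⊆ φ p ∧ φ p ∈ H) ∧
      Set.InjOn φ ↑S ∧
      (∀ h ∈ H, (∃ p ∈ S, φ p = h) ∨ (∀ p, p ⊆ h → p.card = 2 → p ∈ S)) := by
  intro H
  induction H using Finset.strongInduction with
  | _ H ih =>
    intro h3
    rcases H.eq_empty_or_nonempty with rfl | ⟨h₀, hh₀⟩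
    · exact ⟨∅, id, by simp, by simp, by simp⟩
    · have hsub : H.erase h₀ ⊂ H := Finset.erase_ssubset hh₀
      obtain ⟨S₀, φ₀, hS₀, hinj₀, hcov₀⟩ :=
        ih _ hsub (fun h hh => h3 h (Finset.mem_of_mem_erase hh))
      by_cases hc : ∀ p, p ⊆ h₀ → p.card = 2 → p ∈ S₀
      · refine ⟨S₀, φ₀, fun p hp => ⟨(hS₀ p hp).1, (hS₀ p hp).2.1,
          Finset.mem_of_mem_erase (hS₀ p hp).2.2⟩, hinj₀, ?_⟩
        intro h hh
        by_cases he : h = h₀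
        · exact Or.inr (he ▸ hc)
        · rcases hcov₀ h (Finset.mem_erase.2 ⟨he, hh⟩) with ⟨p, hp, hφ⟩ | hbad
          · exact Or.inl ⟨p, hp, hφ⟩
          · exact Or.inr hbad
      · push_neg at hc
        obtain ⟨p, hp1, hp2, hp3⟩ := hc
        refine ⟨insert p S₀, Function.update φ₀ p h₀, ?_, ?_, ?_⟩
        · intro q hq
          rcases Finset.mem_insert.1 hq with rfl | hq
          · rw [Function.update_self]
            exact ⟨hp2, hp1, hh₀⟩
          · have hne : q ≠ p := fun he => hp3 (he ▸ hq)
            rw [Function.update_of_ne hne]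
            exact ⟨(hS₀ q hq).1, (hS₀ q hq).2.1, Finset.mem_of_mem_erase (hS₀ q hq).2.2⟩
        · intro q1 hq1 q2 hq2 heq
          simp only [Finset.coe_insert, Set.mem_insert_iff, Finset.mem_coe] at hq1 hq2
          rcases hq1 with rfl | hq1 <;> rcases hq2 with rfl | hq2
          · rfl
          · exfalso
            have hne : q2 ≠ q1 := fun he => hp3 (he ▸ hq2)
            rw [Function.update_self, Function.update_of_ne hne] at heq
            exact (Finset.mem_erase.1 (hS₀ q2 hq2).2.2).1 heq.symm
          · exfalso
            have hne : q1 ≠ q2 := fun he => hp3 (he ▸ hq1)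
            rw [Function.update_self, Function.update_of_ne hne] at heq
            exact (Finset.mem_erase.1 (hS₀ q1 hq1).2.2).1 heq
          · have hne1 : q1 ≠ p := fun he => hp3 (he ▸ hq1)
            have hne2 : q2 ≠ p := fun he => hp3 (he ▸ hq2)
            rw [Function.update_of_ne hne1, Function.update_of_ne hne2] at heq
            exact hinj₀ hq1 hq2 heq
        · intro h hh
          by_cases he : h = h₀
          · subst he
            exact Or.inl ⟨p, Finset.mem_insert_self _ _, Function.update_self _ _ _⟩
          · rcases hcov₀ h (Finset.mem_erase.2 ⟨he, hh⟩) with ⟨q, hq, hφ⟩ | hbad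
            · have hne : q ≠ p := fun h' => hp3 (h' ▸ hq)
              exact Or.inl ⟨q, Finset.mem_insert_of_mem hq, by rw [Function.update_of_ne hne]; exact hφ⟩
            · exact Or.inr fun q hq1 hq2 => Finset.mem_insert_of_mem (hbad q hq1 hq2)

lemma cover_le (s t n : ℕ) (hs : 2 ≤ s) (hst : s ≤ t) :
    coverTuranNumber {3} n (completeBipartiteGraph (Fin s) (Fin t))
      ≤ 4 * turanNumber n (completeBipartiteGraph (Fin s) (Fin t)) := by
  classical
  set K := completeBipartiteGraph (Fin s) (Fin t) with hK
  have hst' : 0 < t := by omega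
  have ha0 : K.Adj (Sum.inl (⟨0, by omega⟩ : Fin s)) (Sum.inr (⟨0, by omega⟩ : Fin t)) := by simp [hK]
  apply csSup_le
  · refine ⟨0, ∅, by simp, ?_, by simp [covPairs]⟩
    rintro ⟨i, f, hi, hf, hmem, hcov⟩
    exact absurd (hmem _ ((K.mem_edgeSet).2 ha0)) (by simp)
  · rintro m ⟨H, h3, hBerge, rfl⟩
    obtain ⟨S, φ, hS, hinj, hcov⟩ := greedy H (fun h hh => by simpa using h3 h hh)
    set GS : SimpleGraph (Fin n) := {
      Adj := fun u v => u ≠ v ∧ ({u, v} : Finset (Fin n)) ∈ S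
      symm := ⟨by
        rintro u v ⟨h1, h2⟩
        exact ⟨h1.symm, by rwa [Finset.pair_comm]⟩⟩
      loopless := ⟨fun u h => h.1 rfl⟩ } with hGS
    have hadjS : ∀ {u v}, GS.Adj u v → ({u, v} : Finset (Fin n)) ∈ S := fun h => h.2
    have hKfree : ¬ (∃ f : K →g GS, Function.Injective f) := by
      rintro ⟨g, ginj⟩
      apply hBerge
      refine ⟨g, Sym2.lift ⟨fun u v => φ {g u, g v},
        fun u v => by show φ {g u, g v} = φ {g v, g u}; rw [Finset.pair_comm]⟩, ginj, ?_, ?_, ?_⟩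
      · intro e1 he1 e2 he2 heq
        induction e1 with
        | _ u1 v1 =>
          induction e2 with
          | _ u2 v2 =>
            simp only [Sym2.lift_mk] at heq
            have h1 : ({g u1, g v1} : Finset (Fin n)) ∈ S :=
              hadjS (g.map_adj ((K.mem_edgeSet).1 he1))
            have h2 : ({g u2, g v2} : Finset (Fin n)) ∈ S :=
              hadjS (g.map_adj ((K.mem_edgeSet).1 he2))
            have := hinj (Finset.mem_coe.2 h1) (Finset.mem_coe.2 h2) heq
            have hsym : s(g u1, g v1) = s(g u2, g v2) := pair_eq_sym2 this
            rw [← Sym2.map_pair_eq g, ← Sym2.map_pair_eq g] at hsym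
            exact Sym2.map.injective ginj hsym
      · intro e he
        induction e with
        | _ u v =>
          simp only [Sym2.lift_mk]
          exact (hS _ (hadjS (g.map_adj ((K.mem_edgeSet).1 he)))).2.2
      · intro u v huv
        have hmemS := hadjS (g.map_adj huv)
        have hsub := (hS _ hmemS).2.1
        constructor
        · simp only [Sym2.lift_mk]
          exact hsub (by simp)
        · simp only [Sym2.lift_mk]
          exact hsub (by simp)
    -- counting
    have hsubset : covPairs H ⊆ S ∪ S.biUnion (fun p => (φ p).powersetCard 2) := by
      intro q hq
      obtain ⟨h, hh, hq2⟩ := Finset.mem_biUnion.1 hq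
      rw [Finset.mem_powersetCard] at hq2
      rcases hcov h hh with ⟨p, hp, rfl⟩ | hbad
      · exact Finset.mem_union_right _ (Finset.mem_biUnion.2 ⟨p, hp, Finset.mem_powersetCard.2 hq2⟩)
      · exact Finset.mem_union_left _ (hbad q hq2.1 hq2.2)
    have hcount : (covPairs H).card ≤ 4 * S.card := by
      calc (covPairs H).card ≤ (S ∪ S.biUnion (fun p => (φ p).powersetCard 2)).card :=
            Finset.card_le_card hsubset
        _ ≤ S.card + (S.biUnion (fun p => (φ p).powersetCard 2)).card := Finset.card_union_le _ _
        _ ≤ S.card + ∑ p ∈ S, ((φ p).powersetCard 2).card :=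
            Nat.add_le_add_left (Finset.card_biUnion_le) _
        _ ≤ S.card + ∑ p ∈ S, 3 := by
            refine Nat.add_le_add_left (Finset.sum_le_sum fun p hp => ?_) _
            have h33 : (φ p).card = 3 := by simpa using h3 _ (hS p hp).2.2
            rw [Finset.card_powersetCard, h33]
            decide
        _ = 4 * S.card := by rw [Finset.sum_const, smul_eq_mul]; ring
    have hSle : S.card ≤ GS.edgeFinset.card := by
      apply Finset.card_le_card_of_surjOn
        (fun e => Sym2.lift ⟨fun a b => ({a, b} : Finset (Fin n)), fun a b => Finset.pair_comm a b⟩ e)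
      intro p hp
      obtain ⟨u, v, huv, rfl⟩ := Finset.card_eq_two.1 (hS p hp).1
      refine ⟨s(u, v), ?_, by simp⟩
      simp only [Finset.coe_sort_coe, Finset.mem_coe, SimpleGraph.mem_edgeFinset,
        SimpleGraph.mem_edgeSet]
      exact ⟨huv, hp⟩
    have hturan : GS.edgeFinset.card ≤ turanNumber n K := by
      have := le_turan GS hKfree
      rwa [Set.ncard_eq_toFinset_card'] at this
    omega

open Finset Function

lemma no_berge {s t m n : ℕ} (hs : 2 ≤ s) (hst : s ≤ t)
    (F : SimpleGraph (Fin m))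
    (x y b : Fin m → Fin n)
    (hxx : ∀ {i j}, x i = x j → i = j)
    (hyy : ∀ {i j}, y i = y j → i = j)
    (hbb : ∀ {i j}, b i = b j → i = j)
    (hxy : ∀ i j, x i ≠ y j)
    (hxb : ∀ i j, x i ≠ b j)
    (hyb : ∀ i j, y i ≠ b j)
    (H : Finset (Finset (Fin n)))
    (hH : ∀ h ∈ H, ∃ u v, F.Adj u v ∧ h = ({x u, y v, b u} : Finset (Fin n)))
    (hfree : ¬ ∃ f : (completeBipartiteGraph (Fin s) (Fin t)) →g F, Function.Injective f) :
    ¬ HasBergeCopy (completeBipartiteGraph (Fin s) (Fin t)) H := by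
  set K := completeBipartiteGraph (Fin s) (Fin t) with hK
  rintro ⟨i, f, hi, hf, hmem, hcov⟩
  have hadj : ∀ (a : Fin s) (c : Fin t), K.Adj (Sum.inl a) (Sum.inr c) := by
    intro a c; simp [hK]
  have hE : ∀ (a : Fin s) (c : Fin t), s(Sum.inl a, Sum.inr c) ∈ K.edgeSet :=
    fun a c => (K.mem_edgeSet).2 (hadj a c)
  have key : ∀ (a : Fin s) (c : Fin t), ∃ u v, F.Adj u v ∧
      f s(Sum.inl a, Sum.inr c) = ({x u, y v, b u} : Finset (Fin n)) :=
    fun a c => hH _ (hmem _ (hE a c))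
  choose u v huv heq using key
  have hne : ∀ (a : Fin s) (c : Fin t), i (Sum.inl a) ≠ i (Sum.inr c) :=
    fun a c h => absurd (hi h) (by simp)
  have hiL : ∀ {a a' : Fin s}, i (Sum.inl a) = i (Sum.inl a') → a = a' := by
    intro a a' h; have := hi h; simpa using this
  have hiR : ∀ {c c' : Fin t}, i (Sum.inr c) = i (Sum.inr c') → c = c' := by
    intro c c' h; have := hi h; simpa using this
  have hLmem : ∀ (a : Fin s) (c : Fin t), i (Sum.inl a) = x (u a c) ∨
      i (Sum.inl a) = y (v a c) ∨ i (Sum.inl a) = b (u a c) := by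
    intro a c
    have h := (hcov _ _ (hadj a c)).1
    rw [heq a c] at h
    simpa using h
  have hRmem : ∀ (a : Fin s) (c : Fin t), i (Sum.inr c) = x (u a c) ∨
      i (Sum.inr c) = y (v a c) ∨ i (Sum.inr c) = b (u a c) := by
    intro a c
    have h := (hcov _ _ (hadj a c)).2
    rw [heq a c] at h
    simpa using h
  -- row and column constancy lemmas
  have rowX : ∀ (a : Fin s) (p : Fin m), i (Sum.inl a) = x p → ∀ c, u a c = p := by
    intro a p hp c
    rcases hLmem a c with h | h | h
    · rw [hp] at h; exact (hxx h).symm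
    · rw [hp] at h; exact absurd h (hxy _ _)
    · rw [hp] at h; exact absurd h (hxb _ _)
  have rowY : ∀ (a : Fin s) (q : Fin m), i (Sum.inl a) = y q → ∀ c, v a c = q := by
    intro a q hq c
    rcases hLmem a c with h | h | h
    · rw [hq] at h; exact absurd h.symm (hxy _ _)
    · rw [hq] at h; exact (hyy h).symm
    · rw [hq] at h; exact absurd h (hyb _ _)
  have rowB : ∀ (a : Fin s) (p : Fin m), i (Sum.inl a) = b p → ∀ c, u a c = p := by
    intro a p hp c
    rcases hLmem a c with h | h | h
    · rw [hp] at h; exact absurd h.symm (hxb _ _)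
    · rw [hp] at h; exact absurd h.symm (hyb _ _)
    · rw [hp] at h; exact (hbb h).symm
  have colX : ∀ (c : Fin t) (P : Fin m), i (Sum.inr c) = x P → ∀ a, u a c = P := by
    intro c P hP a
    rcases hRmem a c with h | h | h
    · rw [hP] at h; exact (hxx h).symm
    · rw [hP] at h; exact absurd h (hxy _ _)
    · rw [hP] at h; exact absurd h (hxb _ _)
  have colY : ∀ (c : Fin t) (Q : Fin m), i (Sum.inr c) = y Q → ∀ a, v a c = Q := by
    intro c Q hQ a
    rcases hRmem a c with h | h | h
    · rw [hQ] at h; exact absurd h.symm (hxy _ _)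
    · rw [hQ] at h; exact (hyy h).symm
    · rw [hQ] at h; exact absurd h (hyb _ _)
  have colB : ∀ (c : Fin t) (P : Fin m), i (Sum.inr c) = b P → ∀ a, u a c = P := by
    intro c P hP a
    rcases hRmem a c with h | h | h
    · rw [hP] at h; exact absurd h.symm (hxb _ _)
    · rw [hP] at h; exact absurd h.symm (hyb _ _)
    · rw [hP] at h; exact (hbb h).symm
  -- cross same-type contradictions
  have notXX : ∀ (a : Fin s) (c : Fin t) (p P : Fin m),
      i (Sum.inl a) = x p → i (Sum.inr c) = x P → False := by
    intro a c p P h1 h2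
    have e1 := rowX a p h1 c
    have e2 := colX c P h2 a
    exact hne a c (by rw [h1, h2, ← e1, ← e2])
  have notYY : ∀ (a : Fin s) (c : Fin t) (q Q : Fin m),
      i (Sum.inl a) = y q → i (Sum.inr c) = y Q → False := by
    intro a c q Q h1 h2
    have e1 := rowY a q h1 c
    have e2 := colY c Q h2 a
    exact hne a c (by rw [h1, h2, ← e1, ← e2])
  have notBB : ∀ (a : Fin s) (c : Fin t) (p P : Fin m),
      i (Sum.inl a) = b p → i (Sum.inr c) = b P → False := by
    intro a c p P h1 h2
    have e1 := rowB a p h1 c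
    have e2 := colB c P h2 a
    exact hne a c (by rw [h1, h2, ← e1, ← e2])
  have a0 : Fin s := ⟨0, by omega⟩
  have c0 : Fin t := ⟨0, by omega⟩
  by_cases hLY : ∀ a : Fin s, ∃ q, i (Sum.inl a) = y q
  · -- all left Y-type
    choose q hq using hLY
    have hRnotY : ∀ c : Fin t, ∃ P, i (Sum.inr c) = x P ∨ i (Sum.inr c) = b P := by
      intro c
      rcases hRmem a0 c with h | h | h
      · exact ⟨_, Or.inl h⟩
      · exact absurd (notYY a0 c _ _ (hq a0) h) (fun h => h)
      · exact ⟨_, Or.inr h⟩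
    choose P hP using hRnotY
    have hcol : ∀ (a : Fin s) (c : Fin t), u a c = P c := by
      intro a c
      rcases hP c with h | h
      · exact colX c _ h a
      · exact colB c _ h a
    have hrow : ∀ (a : Fin s) (c : Fin t), v a c = q a := fun a c => rowY a _ (hq a) c
    have hPinj : ∀ c c', P c = P c' → c = c' := by
      intro c c' hcc
      have h1 : f s(Sum.inl a0, Sum.inr c) = f s(Sum.inl a0, Sum.inr c') := by
        rw [heq a0 c, heq a0 c', hcol a0 c, hcol a0 c', hrow a0 c, hrow a0 c', hcc]
      have h2 := hf (hE a0 c) (hE a0 c') h1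
      rw [Sym2.eq_iff] at h2
      rcases h2 with ⟨-, h⟩ | ⟨h, -⟩
      · simpa using h
      · simp at h
    have hqinj : ∀ a a', q a = q a' → a = a' := by
      intro a a' h
      exact hiL (by rw [hq a, hq a', h])
    have hadjF : ∀ (a : Fin s) (c : Fin t), F.Adj (q a) (P c) := by
      intro a c
      have := huv a c
      rw [hcol a c, hrow a c] at this
      exact this.symm
    refine hfree ⟨⟨Sum.elim (fun a => q a) (fun c => P c), ?_⟩, ?_⟩
    · intro p1 p2 h
      rcases p1 with a | c <;> rcases p2 with a' | c' <;> simp [hK] at h ⊢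
      · exact hadjF a c'
      · exact (hadjF a' c).symm
    · intro p1 p2 h
      rcases p1 with a | c <;> rcases p2 with a' | c' <;> simp at h ⊢
      · exact hqinj _ _ h
      · exact absurd h (F.ne_of_adj (hadjF a c'))
      · exact absurd h.symm (F.ne_of_adj (hadjF a' c))
      · exact hPinj _ _ h
  · push_neg at hLY
    obtain ⟨a1, ha1⟩ := hLY
    by_cases hRY : ∀ c : Fin t, ∃ q, i (Sum.inr c) = y q
    · -- all right Y-type
      choose q hq using hRY
      have hLnotY : ∀ a : Fin s, ∃ P, i (Sum.inl a) = x P ∨ i (Sum.inl a) = b P := by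
        intro a
        rcases hLmem a c0 with h | h | h
        · exact ⟨_, Or.inl h⟩
        · exact absurd (notYY a c0 _ _ h (hq c0)) (fun h => h)
        · exact ⟨_, Or.inr h⟩
      choose P hP using hLnotY
      have hrow : ∀ (a : Fin s) (c : Fin t), u a c = P a := by
        intro a c
        rcases hP a with h | h
        · exact rowX a _ h c
        · exact rowB a _ h c
      have hcol : ∀ (a : Fin s) (c : Fin t), v a c = q c := fun a c => colY c _ (hq c) a
      have hPinj : ∀ a a', P a = P a' → a = a' := by
        intro a a' haa
        have h1 : f s(Sum.inl a, Sum.inr c0) = f s(Sum.inl a', Sum.inr c0) := by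
          rw [heq a c0, heq a' c0, hrow a c0, hrow a' c0, hcol a c0, hcol a' c0, haa]
        have h2 := hf (hE a c0) (hE a' c0) h1
        rw [Sym2.eq_iff] at h2
        rcases h2 with ⟨h, -⟩ | ⟨h, -⟩
        · simpa using h
        · simp at h
      have hqinj : ∀ c c', q c = q c' → c = c' := by
        intro c c' h
        exact hiR (by rw [hq c, hq c', h])
      have hadjF : ∀ (a : Fin s) (c : Fin t), F.Adj (P a) (q c) := by
        intro a c
        have := huv a c
        rw [hrow a c, hcol a c] at this
        exact this
      refine hfree ⟨⟨Sum.elim (fun a => P a) (fun c => q c), ?_⟩, ?_⟩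
      · intro p1 p2 h
        rcases p1 with a | c <;> rcases p2 with a' | c' <;> simp [hK] at h ⊢
        · exact hadjF a c'
        · exact (hadjF a' c).symm
      · intro p1 p2 h
        rcases p1 with a | c <;> rcases p2 with a' | c' <;> simp at h ⊢
        · exact hPinj _ _ h
        · exact absurd h (F.ne_of_adj (hadjF a c'))
        · exact absurd h.symm (F.ne_of_adj (hadjF a' c))
        · exact hqinj _ _ h
    · -- clash case
      push_neg at hRY
      obtain ⟨c1, hc1⟩ := hRY
      -- a1 is X-type or B-type
      have ha1' : i (Sum.inl a1) = x (u a1 c1) ∨ i (Sum.inl a1) = b (u a1 c1) := by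
        rcases hLmem a1 c1 with h | h | h
        · exact Or.inl h
        · exact absurd h (ha1 _)
        · exact Or.inr h
      have hc1' : i (Sum.inr c1) = x (u a1 c1) ∨ i (Sum.inr c1) = b (u a1 c1) := by
        rcases hRmem a1 c1 with h | h | h
        · exact Or.inl h
        · exact absurd h (hc1 _)
        · exact Or.inr h
      set p1 := u a1 c1 with hp1
      obtain ⟨a2, ha2⟩ : ∃ a2 : Fin s, a2 ≠ a1 := by
        rcases eq_or_ne a1 ⟨0, by omega⟩ with h | h
        · exact ⟨⟨1, by omega⟩, by rw [h]; intro hcon; simp [Fin.ext_iff] at hcon⟩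
        · exact ⟨⟨0, by omega⟩, fun hcon => h hcon.symm⟩
      obtain ⟨c2, hc2⟩ : ∃ c2 : Fin t, c2 ≠ c1 := by
        rcases eq_or_ne c1 ⟨0, by omega⟩ with h | h
        · exact ⟨⟨1, by omega⟩, by rw [h]; intro hcon; simp [Fin.ext_iff] at hcon⟩
        · exact ⟨⟨0, by omega⟩, fun hcon => h hcon.symm⟩
      rcases hc1' with hc1x | hc1b
      · -- c1 is X-type with constant p1 ; a1 must be B-type
        have ha1b : i (Sum.inl a1) = b p1 := by
          rcases ha1' with h | h
          · exact absurd (notXX a1 c1 _ _ h hc1x) (fun h => h)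
          · exact h
        have hcolc1 : ∀ a, u a c1 = p1 := colX c1 p1 hc1x
        -- type of a2
        rcases hLmem a2 c1 with h2 | h2 | h2
        · -- a2 X-type: contra notXX
          exact notXX a2 c1 _ _ h2 hc1x
        · -- a2 Y-type
          -- get type of c2 : must be B-type
          rcases hRmem a1 c2 with g | g | g
          · -- c2 X-type: then i inr c2 = x (u a1 c2) = x p1 = i inr c1
            have : u a1 c2 = p1 := rowB a1 p1 ha1b c2
            rw [this] at g
            exact hc2 (hiR (g.trans hc1x.symm))
          · -- c2 Y-type: contra with a2 Y-type
            exact notYY a2 c2 _ _ h2 g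
          · -- c2 B-type: i inr c2 = b (u a1 c2) = b p1 = i inl a1 : cross equality
            have : u a1 c2 = p1 := rowB a1 p1 ha1b c2
            rw [this] at g
            exact hne a1 c2 (ha1b.trans g.symm)
        · -- a2 B-type: i inl a2 = b (u a2 c1) = b p1 = i inl a1
          rw [hcolc1 a2] at h2
          exact ha2 (hiL (h2.trans ha1b.symm))
      · -- c1 is B-type ; a1 must be X-type
        have ha1x : i (Sum.inl a1) = x p1 := by
          rcases ha1' with h | h
          · exact h
          · exact absurd (notBB a1 c1 _ _ h hc1b) (fun h => h)
        have hcolc1 : ∀ a, u a c1 = p1 := colB c1 p1 hc1b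
        rcases hLmem a2 c1 with h2 | h2 | h2
        · -- a2 X-type: i inl a2 = x (u a2 c1) = x p1 = i inl a1
          rw [hcolc1 a2] at h2
          exact ha2 (hiL (h2.trans ha1x.symm))
        · -- a2 Y-type; find c2's type: must be B is impossible etc.
          rcases hRmem a1 c2 with g | g | g
          · -- c2 X-type: contra with a1 X-type
            exact notXX a1 c2 _ _ ha1x g
          · -- c2 Y-type: contra with a2 Y-type
            exact notYY a2 c2 _ _ h2 g
          · -- c2 B-type: i inr c2 = b (u a1 c2) = b p1 = i inr c1
            have : u a1 c2 = p1 := rowX a1 p1 ha1x c2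
            rw [this] at g
            exact hc2 (hiR (g.trans hc1b.symm))
        · -- a2 B-type: i inl a2 = b (u a2 c1) = b p1 = i inr c1
          rw [hcolc1 a2] at h2
          exact hne a2 c1 (h2.trans hc1b.symm)


lemma cover_bdd (R : Set ℕ) (n : ℕ) {α : Type*} (G : SimpleGraph α) :
    BddAbove { m | ∃ H : Finset (Finset (Fin n)),
      (∀ h ∈ H, h.card ∈ R) ∧ ¬ HasBergeCopy G H ∧ m = (covPairs H).card } := by
  refine ⟨Fintype.card (Finset (Fin n)), ?_⟩
  rintro m ⟨H, -, -, rfl⟩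
  simpa using Finset.card_le_univ (covPairs H)

lemma cover_lower (s t n : ℕ) (hs : 2 ≤ s) (hst : s ≤ t) (hn : 100 ≤ n) :
    turanNumber n (completeBipartiteGraph (Fin s) (Fin t)) ≤
      5 * coverTuranNumber {3} n (completeBipartiteGraph (Fin s) (Fin t)) := by
  classical
  set K := completeBipartiteGraph (Fin s) (Fin t) with hK
  have ha0 : K.Adj (Sum.inl (⟨0, by omega⟩ : Fin s)) (Sum.inr (⟨0, by omega⟩ : Fin t)) := by
    simp [hK]
  set m := n / 3 with hm
  have hm33 : 33 ≤ m := by omega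
  have h3m : 3 * m ≤ n := by omega
  have hmn : m ≤ n := by omega
  obtain ⟨F, hfree, hFcard⟩ := turan_mem ha0 m
  have hx3 : ∀ i : Fin m, 3 * i.val < n := fun i => by have := i.isLt; omega
  have hy3 : ∀ i : Fin m, 3 * i.val + 1 < n := fun i => by have := i.isLt; omega
  have hb3 : ∀ i : Fin m, 3 * i.val + 2 < n := fun i => by have := i.isLt; omega
  set x : Fin m → Fin n := fun i => ⟨3 * i.val, hx3 i⟩ with hxdef
  set y : Fin m → Fin n := fun i => ⟨3 * i.val + 1, hy3 i⟩ with hydef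
  set b : Fin m → Fin n := fun i => ⟨3 * i.val + 2, hb3 i⟩ with hbdef
  have hxx : ∀ {i j}, x i = x j → i = j := by
    intro i j h; rw [Fin.ext_iff] at h ⊢; simp only [hxdef] at h; omega
  have hyy : ∀ {i j}, y i = y j → i = j := by
    intro i j h; rw [Fin.ext_iff] at h ⊢; simp only [hydef] at h; omega
  have hbb : ∀ {i j}, b i = b j → i = j := by
    intro i j h; rw [Fin.ext_iff] at h ⊢; simp only [hbdef] at h; omega
  have hxy : ∀ i j, x i ≠ y j := by
    intro i j h; rw [Fin.ext_iff] at h; simp only [hxdef, hydef] at h; omega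
  have hxb : ∀ i j, x i ≠ b j := by
    intro i j h; rw [Fin.ext_iff] at h; simp only [hxdef, hbdef] at h; omega
  have hyb : ∀ i j, y i ≠ b j := by
    intro i j h; rw [Fin.ext_iff] at h; simp only [hydef, hbdef] at h; omega
  set H : Finset (Finset (Fin n)) :=
    ((univ : Finset (Fin m × Fin m)).filter (fun p => F.Adj p.1 p.2)).image
      (fun p => ({x p.1, y p.2, b p.1} : Finset (Fin n))) with hHdef
  have hH : ∀ h ∈ H, ∃ u v, F.Adj u v ∧ h = ({x u, y v, b u} : Finset (Fin n)) := by
    intro h hh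
    obtain ⟨p, hp, rfl⟩ := Finset.mem_image.1 hh
    exact ⟨p.1, p.2, (Finset.mem_filter.1 hp).2, rfl⟩
  have hcard3 : ∀ h ∈ H, h.card ∈ ({3} : Set ℕ) := by
    intro h hh
    obtain ⟨u, v, -, rfl⟩ := hH h hh
    have hcc : ({x u, y v, b u} : Finset (Fin n)).card = 3 := by
      rw [Finset.card_insert_of_notMem (by simp [hxy u v, hxb u u]),
          Finset.card_insert_of_notMem (by simp [hyb v u])]
      rfl
    simp [hcc]
  have hnb : ¬ HasBergeCopy K H :=
    no_berge hs hst F x y b hxx hyy hbb hxy hxb hyb H hH hfree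
  have hex : (covPairs H).card ≤ coverTuranNumber {3} n K :=
    le_csSup (cover_bdd {3} n K) ⟨H, hcard3, hnb, rfl⟩
  -- dart count
  have hdart : Fintype.card F.Dart = 2 * F.edgeFinset.card := F.dart_card_eq_twice_card_edges
  have hcount : Fintype.card F.Dart ≤ (covPairs H).card := by
    rw [← Finset.card_univ]
    apply Finset.card_le_card_of_injOn
      (fun d : F.Dart => ({x d.toProd.1, y d.toProd.2} : Finset (Fin n)))
    · intro d _
      apply Finset.mem_biUnion.2
      refine ⟨({x d.toProd.1, y d.toProd.2, b d.toProd.1} : Finset (Fin n)), ?_, ?_⟩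
      · exact Finset.mem_image.2 ⟨d.toProd, Finset.mem_filter.2 ⟨Finset.mem_univ _, d.adj⟩, rfl⟩
      · refine Finset.mem_powersetCard.2 ⟨?_, ?_⟩
        · intro z hz
          simp only [Finset.mem_insert, Finset.mem_singleton] at hz ⊢
          tauto
        · rw [Finset.card_insert_of_notMem (by simp [hxy])]
          rfl
    · intro d1 _ d2 _ heq2
      simp only at heq2
      have hx1 : x d1.toProd.1 ∈ ({x d2.toProd.1, y d2.toProd.2} : Finset (Fin n)) := by
        rw [← heq2]; simp
      have hy1 : y d1.toProd.2 ∈ ({x d2.toProd.1, y d2.toProd.2} : Finset (Fin n)) := by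
        rw [← heq2]; simp
      simp only [Finset.mem_insert, Finset.mem_singleton] at hx1 hy1
      have h1 : d1.toProd.1 = d2.toProd.1 := by
        rcases hx1 with h | h
        · exact hxx h
        · exact absurd h (hxy _ _)
      have h2 : d1.toProd.2 = d2.toProd.2 := by
        rcases hy1 with h | h
        · exact absurd h.symm (hxy _ _)
        · exact hyy h
      exact SimpleGraph.Dart.ext _ _ (Prod.ext h1 h2)
  have hFc : F.edgeFinset.card = turanNumber m K := by
    rw [hFcard, Set.ncard_eq_toFinset_card']
    exact congrArg Finset.card (by ext; simp)
  have h2e : 2 * turanNumber m K ≤ coverTuranNumber {3} n K := by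
    rw [← hFc, ← hdart]
    exact le_trans hcount hex
  have hsup := turan_supermult ha0 (show 2 ≤ m by omega) hmn
  have hratio : n * (n - 1) ≤ 10 * (m * (m - 1)) := by
    have hn2 : n ≤ 3 * m + 2 := by omega
    have hm1 : 33 ≤ m := hm33
    obtain ⟨m', hm'⟩ : ∃ m', m = m' + 1 := ⟨m - 1, by omega⟩
    obtain ⟨n', hn'⟩ : ∃ n', n = n' + 1 := ⟨n - 1, by omega⟩
    rw [hm'] at hn2 hm1 ⊢
    rw [hn'] at hn2 ⊢
    simp only [Nat.add_sub_cancel]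
    nlinarith
  have hpos : 0 < n * (n - 1) := by
    apply Nat.mul_pos <;> omega
  have final : n * (n - 1) * turanNumber n K ≤ n * (n - 1) * (5 * coverTuranNumber {3} n K) := by
    calc n * (n - 1) * turanNumber n K
        ≤ 10 * (m * (m - 1)) * turanNumber n K := Nat.mul_le_mul_right _ hratio
      _ = 10 * (m * (m - 1) * turanNumber n K) := by ring
      _ ≤ 10 * (n * (n - 1) * turanNumber m K) := Nat.mul_le_mul_left _ hsup
      _ = n * (n - 1) * (5 * (2 * turanNumber m K)) := by ring
      _ ≤ n * (n - 1) * (5 * coverTuranNumber {3} n K) :=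
          Nat.mul_le_mul_left _ (Nat.mul_le_mul_left _ h2e)
  exact Nat.le_of_mul_le_mul_left final hpos

theorem stmt10 (s t : ℕ) (hs : 2 ≤ s) (hst : s ≤ t) :
    ∃ c₁ c₂ : ℝ, 0 < c₁ ∧ 0 < c₂ ∧ ∃ n₀ : ℕ, ∀ n ≥ n₀,
      c₁ * (turanNumber n (completeBipartiteGraph (Fin s) (Fin t)) : ℝ) ≤
          (coverTuranNumber {3} n (completeBipartiteGraph (Fin s) (Fin t)) : ℝ) ∧
      (coverTuranNumber {3} n (completeBipartiteGraph (Fin s) (Fin t)) : ℝ) ≤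
          c₂ * (turanNumber n (completeBipartiteGraph (Fin s) (Fin t)) : ℝ) := by
  refine ⟨1/5, 4, by norm_num, by norm_num, 100, fun n hn => ⟨?_, ?_⟩⟩
  · have h := cover_lower s t n hs hst hn
    have h2 := (Nat.cast_le (α := ℝ)).2 h
    push_cast at h2
    linarith
  · have h := cover_le s t n hs hst
    have h2 := (Nat.cast_le (α := ℝ)).2 h
    push_cast at h2
    linarith
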